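/- The transformation (V_1, …, V_{h−1}) ↦ (B_1, …, B_{h−1}) is an involution: for every 1 ≤ i ≤ h−1, δ_i(B_1, …, B_{h−1}) = V_i in F_q[V_1, …, V_{h−1}]. -/

import Mathlib

open Finset

noncomputable section

/-- The `(a,b)` entry (0-based) of the matrix `M(W)`, whose 1-based `(i,j)` entry is
`W_{j−i+1}^{q^{i−1}}`, with the convention that entries with negative index vanish. -/
def entryM (q : ℕ) {R : Type*} [CommRing R] (W : ℕ → R) (a b : ℕ) : R :=
  if a ≤ b + 1 then W (b + 1 - a) ^ q ^ a else 0

/-- `δ_i(W) := (−1)^i` times the determinant of the top-left `i×i` submatrix of `M(W)`. -/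
def deltaM (q : ℕ) {R : Type*} [CommRing R] (W : ℕ → R) (i : ℕ) : R :=
  (-1) ^ i * Matrix.det (Matrix.of fun a b : Fin i => entryM q W a b)

/-- The tuple `(V₁, …, V_{h−1})` of variables, extended by the conventions
`V₀ = 1` and `V_j = 0` for `j ≥ h`. -/
def vTuple (K : Type*) [Field K] (h : ℕ) : ℕ → MvPolynomial ℕ K := fun j =>
  if j = 0 then 1 else if j ≤ h - 1 then MvPolynomial.X j else 0

/-- The tuple `(B₁, …, B_{h−1})`, where `B_i = δ_i(V₁, …, V_{h−1})`, extended by the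
conventions `B₀ = 1` and `B_j = 0` for `j ≥ h`. -/
def bTuple (q : ℕ) (K : Type*) [Field K] (h : ℕ) : ℕ → MvPolynomial ℕ K := fun j =>
  if j = 0 then 1 else if j ≤ h - 1 then deltaM q (vTuple K h) j else 0

section Aux
variable {R : Type*} [CommRing R] (q : ℕ) (W : ℕ → R)

def Fmat (m i : ℕ) : Matrix (Fin i) (Fin i) R :=
  Matrix.of fun a b => if (b : ℕ) + 1 = i then entryM q (fun j => W (j + m)) a b else entryM q W a b

lemma Fmat_zero (i : ℕ) :
    Fmat q W 0 i = Matrix.of fun a b : Fin i => entryM q W a b := by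
  ext a b; simp [Fmat, entryM]

lemma deltaM_eq_Fmat (i : ℕ) : deltaM q W i = (-1) ^ i * (Fmat q W 0 i).det := by
  rw [deltaM, Fmat_zero]

lemma det_Fmat_succ (hW0 : W 0 = 1) (m n : ℕ) :
    (Fmat q W m (n+2)).det =
      W (m+1) ^ q ^ (n+1) * (Fmat q W 0 (n+1)).det - (Fmat q W (m+1) (n+1)).det := by
  rw [Matrix.det_succ_row _ (Fin.last (n+1))]
  rw [Fin.sum_univ_castSucc, Fin.sum_univ_castSucc]
  have h0 : ∀ j : Fin n, Fmat q W m (n+2) (Fin.last (n+1)) (j.castSucc.castSucc) = 0 := by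
    intro j
    have hj : (j : ℕ) < n := j.isLt
    simp only [Fmat, Matrix.of_apply, entryM, Fin.val_last, Fin.coe_castSucc]
    rw [if_neg (by omega), if_neg (by omega)]
  have hsum0 : (∑ j : Fin n, (-1 : R) ^ ((Fin.last (n+1) : ℕ) + (j.castSucc.castSucc : ℕ)) *
      Fmat q W m (n+2) (Fin.last (n+1)) (j.castSucc.castSucc) *
      ((Fmat q W m (n+2)).submatrix (Fin.last (n+1)).succAbove (j.castSucc.castSucc).succAbove).det) = 0 := by
    apply Finset.sum_eq_zero; intro j _; rw [h0]; ring
  rw [hsum0, zero_add]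
  -- entry at (last, castSucc (last n))
  have hA1 : Fmat q W m (n+2) (Fin.last (n+1)) ((Fin.last n).castSucc) = 1 := by
    simp only [Fmat, Matrix.of_apply, entryM, Fin.val_last, Fin.coe_castSucc]
    rw [if_neg (by omega), if_pos (by omega)]
    simp [hW0]
  have hA2 : Fmat q W m (n+2) (Fin.last (n+1)) (Fin.last (n+1)) = W (m+1) ^ q ^ (n+1) := by
    simp only [Fmat, Matrix.of_apply, entryM, Fin.val_last]
    norm_num [Nat.add_comm]
  have hM1 : (Fmat q W m (n+2)).submatrix (Fin.last (n+1)).succAbove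
      ((Fin.last n).castSucc).succAbove = Fmat q W (m+1) (n+1) := by
    ext a b
    simp only [Matrix.submatrix_apply, Fin.succAbove_last, Fmat, Matrix.of_apply]
    by_cases hb : (b : ℕ) < n
    · have hcol : ((Fin.last n).castSucc.succAbove b : ℕ) = (b : ℕ) := by
        rw [Fin.succAbove]
        rw [if_pos (by simp [Fin.lt_def, hb])]
        simp
      rw [show ((Fin.last n).castSucc.succAbove b) = ⟨(b:ℕ), by omega⟩ from Fin.ext hcol]
      simp only [Fin.coe_castSucc]
      rw [if_neg (by omega), if_neg (by omega)]
    · have hbn : (b : ℕ) = n := by omega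
      have hcol : ((Fin.last n).castSucc.succAbove b : ℕ) = n + 1 := by
        rw [Fin.succAbove]
        rw [if_neg (by simp [Fin.lt_def, hbn])]
        simp [Fin.val_succ, hbn]
      rw [show ((Fin.last n).castSucc.succAbove b) = ⟨n+1, by omega⟩ from Fin.ext hcol]
      simp only [Fin.coe_castSucc]
      simp only [if_true]
      rw [if_pos (by omega)]
      simp only [entryM, Fin.coe_castSucc]
      rw [if_pos (by omega), if_pos (by omega)]
      have harith : n + 1 + 1 - ↑a + m = ↑b + 1 - ↑a + (m + 1) := by omega
      simp only [harith]
  have hM2 : (Fmat q W m (n+2)).submatrix (Fin.last (n+1)).succAbove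
      (Fin.last (n+1)).succAbove = Fmat q W 0 (n+1) := by
    ext a b
    simp only [Matrix.submatrix_apply, Fin.succAbove_last, Fmat, Matrix.of_apply, Fin.coe_castSucc]
    rw [if_neg (by omega)]
    by_cases hb : (b : ℕ) + 1 = n + 1
    · rw [if_pos hb]; simp [entryM]
    · rw [if_neg hb]
  rw [hA1, hA2, hM1, hM2]
  have hs1 : (-1 : R) ^ ((Fin.last (n+1) : ℕ) + ((Fin.last n).castSucc : ℕ)) = -1 := by
    simp only [Fin.val_last, Fin.coe_castSucc]
    exact Odd.neg_one_pow ⟨n, by ring⟩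
  have hs2 : (-1 : R) ^ ((Fin.last (n+1) : ℕ) + ((Fin.last (n+1)) : ℕ)) = 1 := by
    simp only [Fin.val_last]
    rw [← two_mul]
    exact Even.neg_one_pow ⟨n+1, by ring⟩
  rw [hs1, hs2]
  ring

lemma det_Fmat_unroll (hW0 : W 0 = 1) :
    ∀ n m : ℕ, (Fmat q W m (n+1)).det =
      ∑ k ∈ range (n+1), (-1) ^ k * W (m+k+1) ^ q ^ (n-k) * (Fmat q W 0 (n-k)).det := by
  intro n
  induction n with
  | zero =>
    intro m
    have : (Fmat q W m 1).det = W (m+1) := by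
      rw [Matrix.det_fin_one]
      simp [Fmat, entryM, Nat.add_comm]
    rw [this]
    simp [Matrix.det_fin_zero]
  | succ n ih =>
    intro m
    rw [det_Fmat_succ q W hW0 m n, ih (m+1)]
    rw [Finset.sum_range_succ' (fun k => (-1:R) ^ k * W (m+k+1) ^ q ^ (n+1-k) * (Fmat q W 0 (n+1-k)).det) (n+1)]
    simp only [Nat.sub_zero, pow_zero, one_mul, Nat.add_sub_cancel_left]
    have : ∀ k, (-1:R) ^ (k+1) * W (m+(k+1)+1) ^ q ^ (n+1-(k+1)) * (Fmat q W 0 (n+1-(k+1))).det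
        = -((-1:R) ^ k * W (m+1+k+1) ^ q ^ (n-k) * (Fmat q W 0 (n-k)).det) := by
      intro k
      have h1 : n+1-(k+1) = n-k := by omega
      have h2 : m+(k+1)+1 = m+1+k+1 := by omega
      rw [h1, h2, pow_succ]
      ring
    rw [Finset.sum_congr rfl (fun k _ => this k), Finset.sum_neg_distrib]
    ring

lemma deltaM_conv (hW0 : W 0 = 1) (i : ℕ) (hi : 1 ≤ i) :
    ∑ j ∈ range (i+1), deltaM q W j * W (i - j) ^ q ^ j = 0 := by
  obtain ⟨n, rfl⟩ : ∃ n, i = n + 1 := ⟨i - 1, by omega⟩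
  rw [Finset.sum_range_succ]
  have hD : (Fmat q W 0 (n+1)).det =
      ∑ j ∈ range (n+1), (-1:R) ^ (n-j) * W (n+1-j) ^ q ^ j * (Fmat q W 0 j).det := by
    rw [det_Fmat_unroll q W hW0 n 0]
    rw [← Finset.sum_range_reflect]
    apply Finset.sum_congr rfl
    intro j hj
    rw [Finset.mem_range] at hj
    have h3 : n - (n + 1 - 1 - j) = j := by omega
    have h4 : 0 + (n + 1 - 1 - j) + 1 = n + 1 - j := by omega
    have h5 : n + 1 - 1 - j = n - j := by omega
    rw [h3, h4, h5]
  have hlast : deltaM q W (n+1) * W (n+1-(n+1)) ^ q ^ (n+1)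
      = (-1:R)^(n+1) * ∑ j ∈ range (n+1), (-1:R) ^ (n-j) * W (n+1-j) ^ q ^ j * (Fmat q W 0 j).det := by
    rw [Nat.sub_self, hW0, one_pow, mul_one, deltaM_eq_Fmat, hD]
  rw [hlast]
  rw [Finset.mul_sum, ← Finset.sum_add_distrib]
  apply Finset.sum_eq_zero
  intro j hj
  rw [Finset.mem_range] at hj
  rw [deltaM_eq_Fmat]
  have hsign : (-1:R)^(n+1) * (-1:R)^(n-j) = -(-1:R)^j := by
    have : (n+1) + (n-j) = 2*(n-j) + j + 1 := by omega
    rw [← pow_add, this, pow_succ, pow_add, pow_mul]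
    norm_num
  calc (-1:R) ^ j * (Fmat q W 0 j).det * W (n + 1 - j) ^ q ^ j +
        (-1:R) ^ (n + 1) * ((-1:R) ^ (n - j) * W (n + 1 - j) ^ q ^ j * (Fmat q W 0 j).det)
      = ((-1:R)^j + (-1:R)^(n+1) * (-1:R)^(n-j)) * ((Fmat q W 0 j).det * W (n + 1 - j) ^ q ^ j) := by ring
    _ = 0 := by rw [hsign]; ring

lemma deltaM_zero' : deltaM q W 0 = 1 := by
  simp [deltaM, Matrix.det_fin_zero]

lemma deltaM_congr {W1 W2 : ℕ → R} (i : ℕ) (h : ∀ j ≤ i, W1 j = W2 j) :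
    deltaM q W1 i = deltaM q W2 i := by
  unfold deltaM
  congr 1
  apply congrArg
  ext a b
  unfold entryM
  simp only [Matrix.of_apply]
  have hb : (b : ℕ) < i := b.isLt
  by_cases hab : (a : ℕ) ≤ (b : ℕ) + 1
  · rw [if_pos hab, if_pos hab, h _ (by omega)]
  · rw [if_neg hab, if_neg hab]

lemma sum_triangle {M : Type*} [AddCommMonoid M] (N : ℕ) (f : ℕ → ℕ → M) :
    ∑ j ∈ range N, ∑ k ∈ range (N - j), f j k
      = ∑ m ∈ range N, ∑ j ∈ range (m+1), f j (m - j) := by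
  rw [Finset.sum_sigma' (range N) (fun j => range (N - j)) f,
      Finset.sum_sigma' (range N) (fun m => range (m+1)) (fun m j => f j (m - j))]
  apply Finset.sum_nbij' (fun x => (⟨x.1 + x.2, x.1⟩ : Σ _ : ℕ, ℕ))
    (fun y => (⟨y.2, y.1 - y.2⟩ : Σ _ : ℕ, ℕ))
  · intro a ha
    simp only [Finset.mem_sigma, Finset.mem_range] at *
    omega
  · intro a ha
    simp only [Finset.mem_sigma, Finset.mem_range] at *
    omega
  · intro a ha
    simp only [Finset.mem_sigma, Finset.mem_range] at ha
    ext <;> simp <;> omega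
  · intro a ha
    simp only [Finset.mem_sigma, Finset.mem_range] at ha
    ext <;> simp <;> omega
  · intro a ha
    simp only [Finset.mem_sigma, Finset.mem_range] at ha
    simp only []
    congr 1
    omega
end Aux


/-- The transformation `(V₁, …, V_{h−1}) ↦ (B₁, …, B_{h−1})` is an involution. -/
theorem deltaM_bTuple_involution
    (p e q h : ℕ) (hp : p.Prime) (he : 1 ≤ e) (hq : q = p ^ e) (hh : 2 ≤ h)
    (K : Type*) [Field K] [Fintype K] (hK : Fintype.card K = q)
    (i : ℕ) (hi1 : 1 ≤ i) (hi2 : i ≤ h - 1) :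
    deltaM q (bTuple q K h) i = MvPolynomial.X i := by
  -- characteristic setup
  haveI hKp : CharP K p := by
    obtain ⟨n, hr, hcard⟩ := FiniteField.card K (ringChar K)
    have hdvd : p ∣ (ringChar K) ^ (n : ℕ) := by
      rw [← hcard, hK, hq]; exact dvd_pow_self p (by omega)
    have : p = ringChar K :=
      (Nat.prime_dvd_prime_iff_eq hp hr).mp (hp.dvd_of_dvd_pow hdvd)
    exact this ▸ ringChar.charP K
  haveI : CharP (MvPolynomial ℕ K) p := by infer_instance
  haveI : ExpChar (MvPolynomial ℕ K) p := ExpChar.prime hp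
  set R := MvPolynomial ℕ K
  have hq2 : 2 ≤ q := by
    rw [hq]; exact le_trans hp.two_le (Nat.le_self_pow (by omega) p)
  -- Frobenius powers
  have hφ : ∀ j : ℕ, ∃ φ : R →+* R, ∀ x, φ x = x ^ q ^ j := by
    intro j
    refine ⟨iterateFrobenius R p (e * j), fun x => ?_⟩
    rw [iterateFrobenius_def, hq, ← pow_mul]
  set V : ℕ → R := vTuple K h with hVdef
  set B : ℕ → R := fun j => deltaM q V j with hBdef
  set C : ℕ → R := fun j => deltaM q B j with hCdef
  have hV0 : V 0 = 1 := by simp [hVdef, vTuple]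
  have hB0 : B 0 = 1 := by rw [hBdef]; exact deltaM_zero' q V
  have gA : ∀ m, ∑ j ∈ range (m+1), B j * V (m-j) ^ q ^ j
      = if m = 0 then 1 else 0 := by
    intro m
    rcases Nat.eq_zero_or_pos m with hm | hm
    · subst hm; simp [hB0, hV0]
    · rw [if_neg (by omega)]
      exact deltaM_conv q V hV0 m hm
  have gB : ∀ m, ∑ j ∈ range (m+1), C j * B (m-j) ^ q ^ j
      = if m = 0 then 1 else 0 := by
    intro m
    rcases Nat.eq_zero_or_pos m with hm | hm
    · subst hm; simp [hCdef, deltaM_zero', hB0]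
    · rw [if_neg (by omega)]
      exact deltaM_conv q B hB0 m hm
  -- reduce bTuple to B
  have hred : deltaM q (bTuple q K h) i = C i := by
    rw [hCdef]
    apply deltaM_congr
    intro j hj
    rcases Nat.eq_zero_or_pos j with h0 | h0
    · subst h0; simp [bTuple, hB0]
    · have : j ≤ h - 1 := le_trans hj hi2
      simp [bTuple, this, Nat.pos_iff_ne_zero.mp h0, hBdef, hVdef]
  rw [hred]
  -- the double sum S
  set S : R := ∑ j ∈ range (i+1), C j * (∑ k ∈ range (i+1-j), B k * V (i-j-k) ^ q ^ k) ^ q ^ j with hSdef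
  have hS1 : S = C i := by
    rw [hSdef]
    have : ∀ j ∈ range (i+1), C j * (∑ k ∈ range (i+1-j), B k * V (i-j-k) ^ q ^ k) ^ q ^ j
        = C j * ((if i - j = 0 then (1:R) else 0)) ^ q ^ j := by
      intro j hj
      rw [Finset.mem_range] at hj
      congr 2
      rw [show i+1-j = (i-j)+1 by omega]
      exact gA (i-j)
    rw [Finset.sum_congr rfl this]
    rw [Finset.sum_eq_single_of_mem i (Finset.self_mem_range_succ i)]
    · rw [Nat.sub_self, if_pos rfl, one_pow, mul_one]
    · intro j hj hne
      rw [Finset.mem_range] at hj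
      rw [if_neg (by omega), zero_pow (by positivity), mul_zero]
  have hS2 : S = V i := by
    rw [hSdef]
    have step1 : ∀ j ∈ range (i+1),
        C j * (∑ k ∈ range (i+1-j), B k * V (i-j-k) ^ q ^ k) ^ q ^ j
        = ∑ k ∈ range (i+1-j), C j * B k ^ q ^ j * V (i-j-k) ^ q ^ (j+k) := by
      intro j _
      obtain ⟨φ, hφj⟩ := hφ j
      rw [← hφj, map_sum, Finset.mul_sum]
      apply Finset.sum_congr rfl
      intro k _
      rw [map_mul, map_pow, hφj, hφj]
      rw [← pow_mul, ← pow_add, mul_assoc]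
    rw [Finset.sum_congr rfl step1]
    rw [sum_triangle (i+1) (fun j k => C j * B k ^ q ^ j * V (i-j-k) ^ q ^ (j+k))]
    have step2 : ∀ m ∈ range (i+1),
        ∑ j ∈ range (m+1), C j * B (m-j) ^ q ^ j * V (i-j-(m-j)) ^ q ^ (j+(m-j))
        = (∑ j ∈ range (m+1), C j * B (m-j) ^ q ^ j) * V (i-m) ^ q ^ m := by
      intro m hm
      rw [Finset.mem_range] at hm
      rw [Finset.sum_mul]
      apply Finset.sum_congr rfl
      intro j hj
      rw [Finset.mem_range] at hj
      rw [show i - j - (m - j) = i - m by omega, show j + (m - j) = m by omega]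
    rw [Finset.sum_congr rfl step2]
    have step3 : ∀ m ∈ range (i+1),
        (∑ j ∈ range (m+1), C j * B (m-j) ^ q ^ j) * V (i-m) ^ q ^ m
        = (if m = 0 then (1:R) else 0) * V (i-m) ^ q ^ m := by
      intro m _; rw [gB m]
    rw [Finset.sum_congr rfl step3]
    rw [Finset.sum_eq_single_of_mem 0 (Finset.mem_range.mpr (by omega))]
    · simp
    · intro j _ hne
      rw [if_neg hne, zero_mul]
  rw [hS1.symm.trans hS2]
  simp [hVdef, vTuple, hi2, Nat.pos_iff_ne_zero.mp hi1]
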